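/- Let U, V be closed subspaces of a real Hilbert space X such that U + V is closed. Then there exists c < 1 with ‖P_U P_V x‖ ≤ c‖x‖ for all x ∈ (U ∩ V)^⊥, and consequently the range of Id − P_U P_V is closed. -/

import Mathlib

open Submodule ContinuousLinearMap
open scoped InnerProductSpace

private lemma proj_mem_orth_aux {X : Type*} [NormedAddCommGroup X] [InnerProductSpace ℝ X]
    (V W : Submodule ℝ X) [HasOrthogonalProjection V] (hWV : W ≤ V)
    {x : X} (hx : x ∈ Wᗮ) : (orthogonalProjection V x : X) ∈ Wᗮ := by
  rw [Submodule.mem_orthogonal]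
  intro w hw
  have h1 : ⟪w, x - (orthogonalProjection V x : X)⟫_ℝ = 0 :=
    (Submodule.mem_orthogonal _ _).1 (sub_starProjection_mem_orthogonal (K := V) x) w (hWV hw)
  have h2 : ⟪w, x⟫_ℝ = 0 := (Submodule.mem_orthogonal _ _).1 hx w hw
  have h3 := inner_sub_right (𝕜 := ℝ) w x (orthogonalProjection V x : X)
  rw [h1, h2] at h3
  linarith

set_option maxHeartbeats 1000000 in
private lemma sum_map_bound_aux {X : Type*} [NormedAddCommGroup X] [InnerProductSpace ℝ X]
    [CompleteSpace X] (A B : Submodule ℝ X) [CompleteSpace A] [CompleteSpace B]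
    (hABc : IsClosed ((A ⊔ B : Submodule ℝ X) : Set X)) (hdisj : A ⊓ B = ⊥) :
    ∃ K : ℝ, 1 ≤ K ∧ ∀ (u : A) (v : B), ‖(u : X)‖ ≤ K * ‖(u : X) + (v : X)‖ := by
  haveI : CompleteSpace (A ⊔ B : Submodule ℝ X) := hABc.completeSpace_coe
  set f : (A × B) →L[ℝ] X := A.subtypeL.coprod B.subtypeL with hfdef
  have hfmem : ∀ p : A × B, f p ∈ (A ⊔ B : Submodule ℝ X) := fun p =>
    Submodule.add_mem_sup (Submodule.coe_mem p.1) (Submodule.coe_mem p.2)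
  set f' : (A × B) →L[ℝ] (A ⊔ B : Submodule ℝ X) := f.codRestrict (A ⊔ B) hfmem with hf'def
  have hker : LinearMap.ker (f' : (A × B) →ₗ[ℝ] (A ⊔ B : Submodule ℝ X)) = ⊥ := by
    rw [LinearMap.ker_eq_bot']
    rintro ⟨u, v⟩ h
    have h0 : (u : X) + (v : X) = 0 := congrArg Subtype.val h
    have huv : (u : X) ∈ A ⊓ B := by
      refine ⟨u.2, ?_⟩
      rw [eq_neg_of_add_eq_zero_left h0]
      exact Submodule.neg_mem _ v.2
    rw [hdisj] at huv
    have hu0 : (u : X) = 0 := huv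
    have hv0 : (v : X) = 0 := by rw [hu0, zero_add] at h0; exact h0
    exact Prod.ext (Subtype.ext hu0) (Subtype.ext hv0)
  have hrange : LinearMap.range (f' : (A × B) →ₗ[ℝ] (A ⊔ B : Submodule ℝ X)) = ⊤ := by
    rw [LinearMap.range_eq_top]
    rintro ⟨y, hy⟩
    obtain ⟨a, ha, b, hb, hab⟩ := Submodule.mem_sup.1 hy
    exact ⟨(⟨a, ha⟩, ⟨b, hb⟩), Subtype.ext (by exact hab)⟩
  set e := ContinuousLinearEquiv.ofBijective f' hker hrange with hedef
  set C : ℝ := ‖(e.symm : (A ⊔ B : Submodule ℝ X) →L[ℝ] (A × B))‖ with hCdef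
  refine ⟨max C 1, le_max_right _ _, fun u v => ?_⟩
  have h1 : ‖(u : X)‖ ≤ ‖(u, v)‖ := norm_fst_le (u, v)
  have h2 : e.symm (f' (u, v)) = (u, v) := by
    rw [hedef]
    exact ContinuousLinearEquiv.ofBijective_symm_apply_apply f' hker hrange (u, v)
  have h3 : ‖e.symm (f' (u, v))‖ ≤ C * ‖f' (u, v)‖ :=
    (e.symm : (A ⊔ B : Submodule ℝ X) →L[ℝ] (A × B)).le_opNorm _
  rw [h2] at h3
  have h4 : ‖f' (u, v)‖ = ‖(u : X) + (v : X)‖ := rfl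
  rw [h4] at h3
  calc ‖(u : X)‖ ≤ ‖(u, v)‖ := h1
    _ ≤ C * ‖(u : X) + (v : X)‖ := h3
    _ ≤ max C 1 * ‖(u : X) + (v : X)‖ :=
        mul_le_mul_of_nonneg_right (le_max_left _ _) (norm_nonneg _)

set_option maxHeartbeats 2000000 in
theorem alternating_projections_contraction_and_closed_range {X : Type*}
    [NormedAddCommGroup X] [InnerProductSpace ℝ X] [CompleteSpace X]
    (U V : Submodule ℝ X) [U.HasOrthogonalProjection] [V.HasOrthogonalProjection]
    (hUV : IsClosed ((U ⊔ V : Submodule ℝ X) : Set X)) :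
    (∃ c : ℝ, c < 1 ∧ ∀ x ∈ (U ⊓ V)ᗮ,
        ‖(U.orthogonalProjectionOnto ((V.orthogonalProjectionOnto x : X)) : X)‖ ≤ c * ‖x‖)
      ∧ IsClosed (Set.range (fun x : X =>
          x - (U.orthogonalProjectionOnto ((V.orthogonalProjectionOnto x : X)) : X))) := by
  classical
  set W : Submodule ℝ X := U ⊓ V with hWdef
  have hUc : IsClosed (U : Set X) := U.orthogonal_orthogonal ▸ Uᗮ.isClosed_orthogonal
  have hVc : IsClosed (V : Set X) := V.orthogonal_orthogonal ▸ Vᗮ.isClosed_orthogonal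
  have hWc : IsClosed (W : Set X) := by rw [hWdef, Submodule.coe_inf]; exact hUc.inter hVc
  haveI : CompleteSpace W := hWc.completeSpace_coe
  set U' : Submodule ℝ X := U ⊓ Wᗮ with hU'def
  set V' : Submodule ℝ X := V ⊓ Wᗮ with hV'def
  have hWU : W ≤ U := inf_le_left
  have hWV : W ≤ V := inf_le_right
  have hPV : ∀ x ∈ Wᗮ, (orthogonalProjection V x : X) ∈ V' := fun x hx =>
    ⟨Submodule.coe_mem _, proj_mem_orth_aux V W hWV hx⟩
  have hPU : ∀ x ∈ Wᗮ, (orthogonalProjection U x : X) ∈ U' := fun x hx =>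
    ⟨Submodule.coe_mem _, proj_mem_orth_aux U W hWU hx⟩
  have hsum : U' ⊔ V' = (U ⊔ V) ⊓ Wᗮ := by
    apply le_antisymm
    · exact sup_le (le_inf (inf_le_left.trans le_sup_left) inf_le_right)
        (le_inf (inf_le_left.trans le_sup_right) inf_le_right)
    · rintro x ⟨hx1, hx2⟩
      obtain ⟨u, hu, v, hv, rfl⟩ := Submodule.mem_sup.1 hx1
      have hu' : u - (orthogonalProjection W u : X) ∈ U' :=
        ⟨Submodule.sub_mem U hu (hWU (Submodule.coe_mem _)),
          sub_starProjection_mem_orthogonal (K := W) u⟩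
      have hv' : v - (orthogonalProjection W v : X) ∈ V' :=
        ⟨Submodule.sub_mem V hv (hWV (Submodule.coe_mem _)),
          sub_starProjection_mem_orthogonal (K := W) v⟩
      have hzero : (orthogonalProjection W u : X) + (orthogonalProjection W v : X) = 0 := by
        have h1 : orthogonalProjection W (u + v) = 0 :=
          orthogonalProjection_mem_subspace_orthogonalComplement_eq_zero hx2
        have h2 : orthogonalProjection W (u + v) =
            orthogonalProjection W u + orthogonalProjection W v := map_add _ u v
        rw [h1] at h2
        have h3 := congrArg (Subtype.val : W → X) h2.symm
        simpa using h3
      have heq : u + v =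
          (u - (orthogonalProjection W u : X)) + (v - (orthogonalProjection W v : X)) := by
        rw [sub_add_sub_comm, hzero]
        abel
      rw [heq]
      exact Submodule.add_mem_sup hu' hv'
  have hU'c : IsClosed (U' : Set X) := by
    rw [hU'def, Submodule.coe_inf]; exact hUc.inter W.isClosed_orthogonal
  have hV'c : IsClosed (V' : Set X) := by
    rw [hV'def, Submodule.coe_inf]; exact hVc.inter W.isClosed_orthogonal
  have hS'c : IsClosed ((U' ⊔ V' : Submodule ℝ X) : Set X) := by
    rw [hsum, Submodule.coe_inf]; exact hUV.inter W.isClosed_orthogonal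
  have hdisj : U' ⊓ V' = ⊥ := by
    rw [eq_bot_iff]
    rintro x ⟨⟨hxU, hxW⟩, hxV, -⟩
    have hxWmem : x ∈ W := ⟨hxU, hxV⟩
    have h0 : ⟪x, x⟫_ℝ = 0 := (Submodule.mem_orthogonal _ _).1 hxW x hxWmem
    simpa using inner_self_eq_zero.1 h0
  haveI : CompleteSpace U' := hU'c.completeSpace_coe
  haveI : CompleteSpace V' := hV'c.completeSpace_coe
  obtain ⟨K, hK1, hbound⟩ := sum_map_bound_aux U' V' hS'c hdisj
  have hK0 : (0:ℝ) < K := lt_of_lt_of_le one_pos hK1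
  have hKsq' : (0:ℝ) < K ^ 2 := by positivity
  have hKge : (1:ℝ) ≤ K ^ 2 := by nlinarith
  have h1K : 1 / K ^ 2 ≤ 1 := by rw [div_le_one hKsq']; exact hKge
  have h0le : (0:ℝ) ≤ 1 - 1 / K ^ 2 := by linarith
  set c : ℝ := Real.sqrt (1 - 1 / K ^ 2) with hcdef
  have hc0 : 0 ≤ c := Real.sqrt_nonneg _
  have hKsq : (0:ℝ) < 1 / K ^ 2 := by positivity
  have hc1 : c < 1 := by
    rw [hcdef]
    calc Real.sqrt (1 - 1 / K ^ 2) < Real.sqrt 1 := Real.sqrt_lt_sqrt h0le (by linarith)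
      _ = 1 := Real.sqrt_one
  have hmain : ∀ x ∈ Wᗮ,
      ‖(orthogonalProjection U ((orthogonalProjection V x : X)) : X)‖ ≤ c * ‖x‖ := by
    intro x hx
    set y : X := (orthogonalProjection V x : X) with hydef
    set z : X := (orthogonalProjection U y : X) with hzdef
    have hyV' : y ∈ V' := hPV x hx
    have hzU' : z ∈ U' := hPU y hyV'.2
    have hyx : ‖y‖ ≤ ‖x‖ := by
      calc ‖y‖ = ‖orthogonalProjection V x‖ := rfl
        _ ≤ ‖orthogonalProjection V‖ * ‖x‖ := (orthogonalProjection V).le_opNorm x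
        _ ≤ 1 * ‖x‖ := mul_le_mul_of_nonneg_right (orthogonalProjection_norm_le V) (norm_nonneg _)
        _ = ‖x‖ := one_mul _
    have horth : ⟪z, y - z⟫_ℝ = 0 :=
      (Submodule.mem_orthogonal _ _).1 (sub_starProjection_mem_orthogonal (K := U) y) z hzU'.1
    have hinner : ⟪z, y⟫_ℝ = ‖z‖ ^ 2 := by
      have h6 : ⟪z, z + (y - z)⟫_ℝ = ⟪z, z⟫_ℝ + ⟪z, y - z⟫_ℝ := inner_add_right _ _ _
      rw [show z + (y - z) = y from by abel] at h6
      rw [h6, horth, add_zero, real_inner_self_eq_norm_sq]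
    have hzy : ‖z‖ ≤ c * ‖y‖ := by
      rcases eq_or_ne (‖y‖) 0 with hy0 | hy0
      · have hyz : y = 0 := norm_eq_zero.1 hy0
        have hz00 : z = 0 := by rw [hzdef, hyz]; simp
        simp [hz00, hy0]
      · have hy0' : (0:ℝ) < ‖y‖ := lt_of_le_of_ne (norm_nonneg _) (Ne.symm hy0)
        set t : ℝ := ‖z‖ ^ 2 / ‖y‖ ^ 2 with htdef
        have hty : -(t • y) ∈ V' := Submodule.neg_mem _ (Submodule.smul_mem _ _ hyV')
        have hb := hbound ⟨z, hzU'⟩ ⟨-(t • y), hty⟩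
        have hb' : ‖z‖ ≤ K * ‖z - t • y‖ := by simpa [sub_eq_add_neg] using hb
        have hnormsq : ‖z - t • y‖ ^ 2 = ‖z‖ ^ 2 - ‖z‖ ^ 4 / ‖y‖ ^ 2 := by
          have expand : ‖z - t • y‖ ^ 2 = ‖z‖ ^ 2 - 2 * t * ⟪z, y⟫_ℝ + t ^ 2 * ‖y‖ ^ 2 := by
            rw [norm_sub_sq_real, real_inner_smul_right, norm_smul, Real.norm_eq_abs,
              mul_pow, sq_abs]
            ring
          rw [expand, hinner, htdef]
          field_simp
          ring
        have hsq : ‖z‖ ^ 2 ≤ K ^ 2 * (‖z‖ ^ 2 - ‖z‖ ^ 4 / ‖y‖ ^ 2) := by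
          have hm := mul_self_le_mul_self (norm_nonneg z) hb'
          calc ‖z‖ ^ 2 = ‖z‖ * ‖z‖ := by ring
            _ ≤ (K * ‖z - t • y‖) * (K * ‖z - t • y‖) := hm
            _ = K ^ 2 * ‖z - t • y‖ ^ 2 := by ring
            _ = K ^ 2 * (‖z‖ ^ 2 - ‖z‖ ^ 4 / ‖y‖ ^ 2) := by rw [hnormsq]
        rcases eq_or_ne (‖z‖) 0 with hz0 | hz0
        · rw [hz0]; positivity
        · have hz0' : (0:ℝ) < ‖z‖ := lt_of_le_of_ne (norm_nonneg _) (Ne.symm hz0)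
          have hsq2 : ‖z‖ ^ 2 * ‖y‖ ^ 2 ≤ K ^ 2 * (‖z‖ ^ 2 * ‖y‖ ^ 2 - ‖z‖ ^ 4) := by
            have h := mul_le_mul_of_nonneg_right hsq (le_of_lt (pow_pos hy0' 2))
            calc ‖z‖ ^ 2 * ‖y‖ ^ 2 ≤ (K ^ 2 * (‖z‖ ^ 2 - ‖z‖ ^ 4 / ‖y‖ ^ 2)) * ‖y‖ ^ 2 := h
              _ = K ^ 2 * (‖z‖ ^ 2 * ‖y‖ ^ 2 - ‖z‖ ^ 4) := by field_simp
          have hsq3 : (K ^ 2 * ‖z‖ ^ 2) * ‖z‖ ^ 2 ≤ ((K ^ 2 - 1) * ‖y‖ ^ 2) * ‖z‖ ^ 2 := by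
            nlinarith [hsq2]
          have hsq4 : K ^ 2 * ‖z‖ ^ 2 ≤ (K ^ 2 - 1) * ‖y‖ ^ 2 :=
            le_of_mul_le_mul_right hsq3 (pow_pos hz0' 2)
          have hzsq : ‖z‖ ^ 2 ≤ (1 - 1 / K ^ 2) * ‖y‖ ^ 2 := by
            have heq2 : (1 - 1 / K ^ 2) * ‖y‖ ^ 2 = ((K ^ 2 - 1) * ‖y‖ ^ 2) / K ^ 2 := by
              field_simp
            rw [heq2, le_div_iff₀ hKsq']
            nlinarith [hsq4]
          have hfin : ‖z‖ ≤ Real.sqrt ((1 - 1 / K ^ 2) * ‖y‖ ^ 2) := by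
            rw [← Real.sqrt_sq (norm_nonneg z)]
            exact Real.sqrt_le_sqrt hzsq
          calc ‖z‖ ≤ Real.sqrt ((1 - 1 / K ^ 2) * ‖y‖ ^ 2) := hfin
            _ = c * ‖y‖ := by
                rw [Real.sqrt_mul h0le, Real.sqrt_sq (norm_nonneg y)]
    calc ‖z‖ ≤ c * ‖y‖ := hzy
      _ ≤ c * ‖x‖ := mul_le_mul_of_nonneg_left hyx hc0
  refine ⟨⟨c, hc1, hmain⟩, ?_⟩
  -- second part: range of I - P_U P_V equals Wᗮ
  have hrange_sub : ∀ x : X,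
      x - (orthogonalProjection U ((orthogonalProjection V x : X)) : X) ∈ Wᗮ := by
    intro x
    rw [Submodule.mem_orthogonal]
    intro w hw
    have h1 : ⟪w, x - (orthogonalProjection V x : X)⟫_ℝ = 0 :=
      (Submodule.mem_orthogonal _ _).1 (sub_starProjection_mem_orthogonal (K := V) x) w (hWV hw)
    have h2 : ⟪w, (orthogonalProjection V x : X) -
        (orthogonalProjection U ((orthogonalProjection V x : X)) : X)⟫_ℝ = 0 :=
      (Submodule.mem_orthogonal _ _).1 (sub_starProjection_mem_orthogonal (K := U) _) w (hWU hw)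
    have hdecomp : x - (orthogonalProjection U ((orthogonalProjection V x : X)) : X) =
        (x - (orthogonalProjection V x : X)) + ((orthogonalProjection V x : X) -
          (orthogonalProjection U ((orthogonalProjection V x : X)) : X)) := by abel
    rw [hdecomp, inner_add_right, h1, h2, add_zero]
  set T : X →L[ℝ] X :=
    (U.subtypeL.comp (orthogonalProjection U)).comp
      (V.subtypeL.comp (orthogonalProjection V)) with hTdef
  have hT : ∀ x : X, T x = (orthogonalProjection U ((orthogonalProjection V x : X)) : X) :=
    fun x => rfl
  have hTW : ∀ p : Wᗮ, T (p : X) ∈ Wᗮ := fun p => (hPU _ (hPV _ p.2).2).2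
  haveI : CompleteSpace Wᗮ := W.isClosed_orthogonal.completeSpace_coe
  set S : Wᗮ →L[ℝ] Wᗮ := (T.comp Wᗮ.subtypeL).codRestrict Wᗮ hTW with hSdef
  have hSnorm : ‖S‖ ≤ c := by
    apply opNorm_le_bound S hc0
    intro p
    have h5 : ‖S p‖ = ‖T (p : X)‖ := rfl
    rw [h5, hT]
    exact hmain (p : X) p.2
  have hS1 : ‖S‖ < 1 := lt_of_le_of_lt hSnorm hc1
  set uS : (Wᗮ →L[ℝ] Wᗮ)ˣ := Units.oneSub S hS1 with hudef
  have hset : Set.range (fun x : X =>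
      x - (orthogonalProjection U ((orthogonalProjection V x : X)) : X)) = (Wᗮ : Set X) := by
    apply Set.Subset.antisymm
    · rintro _ ⟨x, rfl⟩
      exact hrange_sub x
    · intro yy hyy
      set q : Wᗮ := (↑uS⁻¹ : Wᗮ →L[ℝ] Wᗮ) ⟨yy, hyy⟩ with hqdef
      refine ⟨(q : X), ?_⟩
      have h7 : (uS : Wᗮ →L[ℝ] Wᗮ) q = ⟨yy, hyy⟩ := by
        have h8 : ((uS : Wᗮ →L[ℝ] Wᗮ) * (↑uS⁻¹ : Wᗮ →L[ℝ] Wᗮ)) ⟨yy, hyy⟩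
            = (1 : Wᗮ →L[ℝ] Wᗮ) ⟨yy, hyy⟩ := by rw [uS.mul_inv]
        rw [hqdef]
        simpa only [ContinuousLinearMap.mul_apply, ContinuousLinearMap.one_apply] using h8
      have hval : (uS : Wᗮ →L[ℝ] Wᗮ) q = q - S q := rfl
      rw [hval] at h7
      have h9 : (q : X) - T (q : X) = yy := by
        have := congrArg (Subtype.val : Wᗮ → X) h7
        exact this
      show (q : X) - (orthogonalProjection U ((orthogonalProjection V (q : X) : X)) : X) = yy
      rw [← hT]
      exact h9
  rw [hset]
  exact W.isClosed_orthogonal
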